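/- arXiv:2112.04600 — 8 statements merged into one kernel-verified Lean document; each statement's English description precedes it below -/
import Mathlib

section
/- Let θ : B_E → L be a surjective join-preserving map with θ(∅)=0̂ and r : L → ℝ≥0 strictly order-preserving, submodular, with r(0̂)=0; set s = r∘θ. Then for subsets X, Y of E: the closures of X and Y with respect to the polymatroid s are equal if and only if θ(X) = θ(Y). -/
/-- The closure operator of a polymatroid. -/
def cl {E : Type*} (r : Set E → ℝ) (X : Set E) : Set E :=
  {e | r (X ∪ {e}) = r X}

/-- For the polymatroid `s = r ∘ θ`, the closures of two sets agree if and only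
if their images under `θ` agree. -/
theorem closure_eq_iff_theta_eq {E L : Type*} [Fintype E]
    [Lattice L] [Fintype L] [OrderBot L]
    (θ : Set E → L) (hsurj : Function.Surjective θ)
    (hjoin : ∀ X Y : Set E, θ (X ∪ Y) = θ X ⊔ θ Y)
    (h0 : θ (∅ : Set E) = ⊥)
    (r : L → ℝ) (hrnn : ∀ x, 0 ≤ r x)
    (hrstrict : ∀ x y : L, x < y → r x < r y)
    (hrsub : ∀ x y : L, r (x ⊓ y) + r (x ⊔ y) ≤ r x + r y)
    (hr0 : r ⊥ = 0)
    (X Y : Set E) :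
    cl (fun Z => r (θ Z)) X = cl (fun Z => r (θ Z)) Y ↔ θ X = θ Y := by
  classical
  -- membership in the closure is equivalent to θ {e} ≤ θ of the set
  have key : ∀ (A : Set E) (e : E),
      e ∈ cl (fun Z => r (θ Z)) A ↔ θ {e} ≤ θ A := by
    intro A e
    simp only [cl, Set.mem_setOf_eq]
    constructor
    · intro h
      have hle : θ A ≤ θ (A ∪ {e}) := by rw [hjoin]; exact le_sup_left
      have heq : θ (A ∪ {e}) = θ A := by
        rcases lt_or_eq_of_le hle with hlt | heq
        · exact absurd h (hrstrict _ _ hlt).ne'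
        · exact heq.symm
      rw [hjoin] at heq
      calc θ {e} ≤ θ A ⊔ θ {e} := le_sup_right
        _ = θ A := heq
    · intro h
      rw [hjoin, sup_eq_left.mpr h]
  -- every element of A is in the closure of A
  have hmem : ∀ (A : Set E) (e : E), e ∈ A → θ {e} ≤ θ A := by
    intro A e he
    have hAe : {e} ∪ A = A := Set.union_eq_self_of_subset_left
      (Set.singleton_subset_iff.mpr he)
    calc θ {e} ≤ θ {e} ⊔ θ A := le_sup_left
      _ = θ ({e} ∪ A) := (hjoin _ _).symm
      _ = θ A := by rw [hAe]
  -- if all singletons of A map below θ B, then θ A ≤ θ B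
  have step : ∀ (F : Finset E) (B : Set E),
      (∀ e ∈ F, θ {e} ≤ θ B) → θ (↑F ∪ B) = θ B := by
    intro F
    induction F using Finset.induction_on with
    | empty => intro B _; simp
    | insert a F' ha ih =>
      intro B hF
      have h1 : (↑(insert a F') : Set E) = {a} ∪ ↑F' := by
        rw [Finset.coe_insert, Set.insert_eq]
      rw [h1, Set.union_assoc, hjoin, ih B (fun e he => hF e (Finset.mem_insert_of_mem he)),
        sup_eq_right.mpr (hF a (Finset.mem_insert_self a F'))]
  have hsub : ∀ A B : Set E, (∀ e ∈ A, θ {e} ≤ θ B) → θ A ≤ θ B := by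
    intro A B hAB
    have hA : (↑A.toFinset : Set E) = A := Set.coe_toFinset A
    have := step A.toFinset B (fun e he => hAB e (by rwa [Set.mem_toFinset] at he))
    rw [hA] at this
    calc θ A ≤ θ A ⊔ θ B := le_sup_left
      _ = θ (A ∪ B) := (hjoin _ _).symm
      _ = θ B := this
  constructor
  · intro hcl
    apply le_antisymm
    · refine hsub X Y fun e he => ?_
      have : e ∈ cl (fun Z => r (θ Z)) X := (key X e).mpr (hmem X e he)
      exact (key Y e).mp (hcl ▸ this)
    · refine hsub Y X fun e he => ?_
      have : e ∈ cl (fun Z => r (θ Z)) Y := (key Y e).mpr (hmem Y e he)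
      exact (key X e).mp (hcl ▸ this)
  · intro hθ
    ext e
    rw [key, key, hθ]
end

section
/- For every finite lattice L there exists a strictly order-preserving submodular function r : L → ℤ≥0 with r(0̂) = 0. -/
open Finset

/-- Every finite lattice admits a strictly order-preserving submodular
function with nonnegative integer values sending the bottom element to `0`. -/
theorem exists_strict_submodular {L : Type*} [Lattice L] [Fintype L] [OrderBot L] :
    ∃ r : L → ℕ, r ⊥ = 0 ∧ (∀ x y : L, x < y → r x < r y) ∧
      (∀ x y : L, r (x ⊓ y) + r (x ⊔ y) ≤ r x + r y) := by
  classical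
  set u : L → ℕ := fun x => (univ.filter (fun z => x ≤ z)).card with hu
  have hle : ∀ x, u x ≤ Fintype.card L := fun x => by
    simpa [hu] using card_filter_le (univ : Finset L) _
  refine ⟨fun x => Fintype.card L - u x, ?_, ?_, ?_⟩
  · have h : u ⊥ = Fintype.card L := by
      rw [hu]
      simp [Finset.filter_true_of_mem (fun _ _ => bot_le), Finset.card_univ]
    simp [h]
  · intro x y hxy
    have hsub : (univ.filter (fun z => y ≤ z)) ⊂ (univ.filter (fun z => x ≤ z)) := by
      refine Finset.ssubset_iff_of_subset ?_ |>.2 ⟨x, by simp, by simp [hxy.not_ge]⟩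
      intro z hz
      simp only [mem_filter, mem_univ, true_and] at hz ⊢
      exact hxy.le.trans hz
    have := Finset.card_lt_card hsub
    have h1 := hle x
    have h2 := hle y
    simp only [hu] at *
    omega
  · intro x y
    have hkey : u x + u y ≤ u (x ⊓ y) + u (x ⊔ y) := by
      have hinter : (univ.filter (fun z => x ≤ z)) ∩ (univ.filter (fun z => y ≤ z))
          = univ.filter (fun z => x ⊔ y ≤ z) := by
        ext z; simp [sup_le_iff]
      have hunion : (univ.filter (fun z => x ≤ z)) ∪ (univ.filter (fun z => y ≤ z))
          ⊆ univ.filter (fun z => x ⊓ y ≤ z) := by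
        intro z hz
        simp only [mem_union, mem_filter, mem_univ, true_and] at hz ⊢
        rcases hz with h | h
        · exact le_trans inf_le_left h
        · exact le_trans inf_le_right h
      have h1 := Finset.card_union_add_card_inter
        (univ.filter (fun z => x ≤ z)) (univ.filter (fun z => y ≤ z))
      have h2 := Finset.card_le_card hunion
      simp only [hu]
      rw [hinter] at h1
      omega
    have h1 := hle (x ⊓ y)
    have h2 := hle (x ⊔ y)
    have h3 := hle x
    have h4 := hle y
    simp only []
    omega
end

section
/- Let L be a finite lattice and define r(ℓ) = 1 − 2^(−k) where k is the length of the longest chain from 0̂ to ℓ. Then r is strictly order-preserving and submodular on L. -/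
/-- If `k ℓ` is the length of the longest chain from `⊥` to `ℓ` in a finite
lattice `L`, then the function `ℓ ↦ 1 - 2 ^ (-(k ℓ))` is strictly
order-preserving and submodular. -/
theorem chain_length_function {L : Type*} [Lattice L] [Fintype L] [OrderBot L]
    (k : L → ℕ)
    (hk : ∀ ℓ : L, IsGreatest
      {n : ℕ | ∃ c : Fin (n + 1) → L, StrictMono c ∧ c 0 = ⊥ ∧ c (Fin.last n) = ℓ}
      (k ℓ)) :
    (∀ x y : L, x < y →
      (1 : ℝ) - (2 : ℝ) ^ (-(k x : ℤ)) < (1 : ℝ) - (2 : ℝ) ^ (-(k y : ℤ))) ∧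
    (∀ x y : L,
      ((1 : ℝ) - (2 : ℝ) ^ (-(k (x ⊓ y) : ℤ))) + ((1 : ℝ) - (2 : ℝ) ^ (-(k (x ⊔ y) : ℤ)))
        ≤ ((1 : ℝ) - (2 : ℝ) ^ (-(k x : ℤ))) + ((1 : ℝ) - (2 : ℝ) ^ (-(k y : ℤ)))) := by
  have hmono : ∀ x y : L, x < y → k x < k y := by
    intro x y hxy
    obtain ⟨c, hc, hc0, hcl⟩ := (hk x).1
    have hmem : k x + 1 ∈
        {n : ℕ | ∃ c : Fin (n + 1) → L, StrictMono c ∧ c 0 = ⊥ ∧ c (Fin.last n) = y} := by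
      refine ⟨Fin.snoc c y, ?_, ?_, ?_⟩
      · rw [Fin.strictMono_iff_lt_succ]
        intro i
        refine Fin.lastCases ?_ ?_ i
        · have h1 : (Fin.last (k x)).castSucc < Fin.last (k x + 1) := by
            simp [Fin.lt_iff_val_lt_val]
          simp only [Fin.snoc_castSucc, Fin.succ_last, Fin.snoc_last, hcl]
          exact hxy
        · intro j
          have : (j.castSucc : Fin (k x + 1)).succ = j.succ.castSucc := by
            exact Fin.ext rfl
          rw [this, Fin.snoc_castSucc, Fin.snoc_castSucc]
          exact hc (Fin.castSucc_lt_succ (i := j))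
      · have : (0 : Fin (k x + 1 + 1)) = (0 : Fin (k x + 1)).castSucc := rfl
        rw [this, Fin.snoc_castSucc, hc0]
      · simp
    have := (hk y).2 hmem
    omega
  constructor
  · intro x y hxy
    have h := hmono x y hxy
    have : (2 : ℝ) ^ (-(k y : ℤ)) < (2 : ℝ) ^ (-(k x : ℤ)) := by
      apply zpow_lt_zpow_right₀ one_lt_two
      omega
    linarith
  · intro x y
    by_cases hxy : x ≤ y
    · rw [inf_eq_left.2 hxy, sup_eq_right.2 hxy]
    by_cases hyx : y ≤ x
    · rw [inf_eq_right.2 hyx, sup_eq_left.2 hyx]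
      clear hxy hyx
      linarith
    have h1 : k (x ⊓ y) < k x := hmono _ _ (inf_lt_left.2 hxy)
    have h2 : k (x ⊓ y) < k y := hmono _ _ (inf_lt_right.2 hyx)
    have e1 : (2 : ℝ) ^ (-(k x : ℤ)) ≤ 2 ^ (-(k (x ⊓ y) : ℤ) - 1) :=
      zpow_le_zpow_right₀ one_le_two (by omega)
    have e2 : (2 : ℝ) ^ (-(k y : ℤ)) ≤ 2 ^ (-(k (x ⊓ y) : ℤ) - 1) :=
      zpow_le_zpow_right₀ one_le_two (by omega)
    have e3 : (2 : ℝ) ^ (-(k (x ⊓ y) : ℤ) - 1) = 2 ^ (-(k (x ⊓ y) : ℤ)) / 2 := by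
      rw [zpow_sub₀ (two_ne_zero)]; norm_num
    have e4 : (0 : ℝ) < 2 ^ (-(k (x ⊔ y) : ℤ)) := zpow_pos two_pos _
    clear hxy hyx
    linarith
end

section
/- Let r be a polymatroid on E with associated join-preserving surjection θ onto its lattice of flats (induced by e ↦ cl({e})), and let X, Y ⊆ E be disjoint. Then the closure operator of the minor (r/X)∖Y equals the closure operator induced by the corresponding minor (θ/X)∖Y of θ, namely for Z₁, Z₂ ⊆ E∖(X∪Y), the closures of Z₁ and Z₂ under (r/X)∖Y agree if and only if θ(Z₁∪X) = θ(Z₂∪X). -/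
lemma span_lemma {E : Type*} (r : Set E → ℝ)
    (hmono : ∀ X Y : Set E, X ⊆ Y → r X ≤ r Y)
    (hsub : ∀ X Y : Set E, r (X ∩ Y) + r (X ∪ Y) ≤ r X + r Y)
    (A : Set E) (S : Set E) (hS : S.Finite)
    (h : ∀ e ∈ S, r (A ∪ {e}) = r A) : r (A ∪ S) = r A := by
  revert h
  refine Set.Finite.induction_on (motive := fun S _ => (∀ e ∈ S, r (A ∪ {e}) = r A) → r (A ∪ S) = r A) S hS (fun _ => by simp) ?_
  intro a s ha hs ih h
  · have hIH : r (A ∪ s) = r A := ih (fun e he => h e (Set.mem_insert_of_mem _ he))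
    have ha' : r (A ∪ {a}) = r A := h a (Set.mem_insert _ _)
    have hsub' := hsub (A ∪ {a}) (A ∪ s)
    have h1 : r A ≤ r ((A ∪ {a}) ∩ (A ∪ s)) :=
      hmono _ _ (fun x hx => ⟨Or.inl hx, Or.inl hx⟩)
    have hun : (A ∪ {a}) ∪ (A ∪ s) = A ∪ insert a s := by
      ext x; simp [Set.mem_insert_iff]; tauto
    have h2 : r A ≤ r (A ∪ insert a s) := hmono _ _ Set.subset_union_left
    rw [hun] at hsub'
    linarith

lemma exchange_lemma {E : Type*} (r : Set E → ℝ)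
    (hmono : ∀ X Y : Set E, X ⊆ Y → r X ≤ r Y)
    (hsub : ∀ X Y : Set E, r (X ∩ Y) + r (X ∪ Y) ≤ r X + r Y)
    (A B : Set E) (hAB : r (A ∪ B) = r A) (hB : r (A ∪ B) = r B)
    (e : E) (he : r (A ∪ {e}) = r A) : r (B ∪ {e}) = r B := by
  have hsub' := hsub (A ∪ {e}) (A ∪ B)
  have h1 : r A ≤ r ((A ∪ {e}) ∩ (A ∪ B)) :=
    hmono _ _ (fun x hx => ⟨Or.inl hx, Or.inl hx⟩)
  have hun : (A ∪ {e}) ∪ (A ∪ B) = (A ∪ B) ∪ {e} := by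
    ext x; simp; tauto
  rw [hun] at hsub'
  have h2 : r (B ∪ {e}) ≤ r ((A ∪ B) ∪ {e}) :=
    hmono _ _ (Set.union_subset_union_left _ Set.subset_union_right)
  have h3 : r B ≤ r (B ∪ {e}) := hmono _ _ Set.subset_union_left
  linarith

/-- For a polymatroid `r` on `E` with `θ(Z) = cl(Z)` and disjoint `X, Y ⊆ E`:
two sets have the same closure under the minor `(r/X)∖Y` if and only if
`cl(Z₁ ∪ X) = cl(Z₂ ∪ X)`. -/
theorem minor_closure_via_theta {E : Type*} [Fintype E] (r : Set E → ℝ)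
    (h0 : r ∅ = 0) (hnn : ∀ X, 0 ≤ r X)
    (hmono : ∀ X Y : Set E, X ⊆ Y → r X ≤ r Y)
    (hsub : ∀ X Y : Set E, r (X ∩ Y) + r (X ∪ Y) ≤ r X + r Y)
    (X Y : Set E) (hXY : Disjoint X Y)
    (Z₁ Z₂ : Set E) (hZ₁ : Z₁ ⊆ (X ∪ Y)ᶜ) (hZ₂ : Z₂ ⊆ (X ∪ Y)ᶜ) :
    {e | e ∈ (X ∪ Y)ᶜ ∧ r ((Z₁ ∪ {e}) ∪ X) - r X = r (Z₁ ∪ X) - r X}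
        = {e | e ∈ (X ∪ Y)ᶜ ∧ r ((Z₂ ∪ {e}) ∪ X) - r X = r (Z₂ ∪ X) - r X}
      ↔ cl r (Z₁ ∪ X) = cl r (Z₂ ∪ X) := by
  set A := Z₁ ∪ X with hA
  set B := Z₂ ∪ X with hB
  have hre1 : ∀ e : E, (Z₁ ∪ {e}) ∪ X = A ∪ {e} := by
    intro e; ext x; simp [hA]; tauto
  have hre2 : ∀ e : E, (Z₂ ∪ {e}) ∪ X = B ∪ {e} := by
    intro e; ext x; simp [hB]; tauto
  constructor
  · intro h
    -- pointwise equivalence on (X ∪ Y)ᶜ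
    have hpt : ∀ e ∈ (X ∪ Y)ᶜ, (r (A ∪ {e}) = r A ↔ r (B ∪ {e}) = r B) := by
      intro e he
      have := Set.ext_iff.mp h e
      simp only [Set.mem_setOf_eq, hre1, hre2, he, true_and, sub_left_inj] at this
      exact this
    -- trivial closure facts for elements of Z₁, Z₂
    have hmemA : ∀ e ∈ Z₁, r (A ∪ {e}) = r A := by
      intro e he
      have heq : A ∪ {e} = A :=
        Set.union_eq_left.mpr (Set.singleton_subset_iff.mpr (Set.mem_union_left _ he))
      rw [heq]
    have hmemB : ∀ e ∈ Z₂, r (B ∪ {e}) = r B := by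
      intro e he
      have heq : B ∪ {e} = B :=
        Set.union_eq_left.mpr (Set.singleton_subset_iff.mpr (Set.mem_union_left _ he))
      rw [heq]
    have hunAB : A ∪ Z₂ = A ∪ B := by ext x; simp [hA, hB]; tauto
    have hunBA : B ∪ Z₁ = A ∪ B := by ext x; simp [hA, hB]; tauto
    have hrA : r (A ∪ B) = r A := by
      rw [← hunAB]
      exact span_lemma r hmono hsub A Z₂ (Set.toFinite _)
        (fun e he => (hpt e (hZ₂ he)).mpr (hmemB e he))
    have hrB : r (A ∪ B) = r B := by
      rw [← hunBA]
      exact span_lemma r hmono hsub B Z₁ (Set.toFinite _)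
        (fun e he => (hpt e (hZ₁ he)).mp (hmemA e he))
    ext e
    simp only [cl, Set.mem_setOf_eq]
    constructor
    · exact exchange_lemma r hmono hsub A B hrA hrB e
    · intro hh
      refine exchange_lemma r hmono hsub B A ?_ ?_ e hh
      · rw [Set.union_comm]; exact hrB
      · rw [Set.union_comm]; exact hrA
  · intro h
    ext e
    have := Set.ext_iff.mp h e
    simp only [cl, Set.mem_setOf_eq] at this
    simp only [Set.mem_setOf_eq, hre1, hre2, sub_left_inj]
    tauto
end

section
/- Let L be a finite geometric lattice, ℓ ∈ L, and ℓ₁,...,ℓ_k elements each covering ℓ. Then the set K = {ℓ ∨ ⋁_{i∈S} ℓ_i : S ⊆ {1,...,k}}, as a join-subsemilattice of L with induced order, is itself a lattice, and if x is covered by y in K then x is covered by y in L. -/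
/-- In a finite geometric lattice `L`, for elements `ℓ₁, …, ℓ_k` covering `ℓ`,
the join-subsemilattice `K = {ℓ ⊔ ⋁_{i ∈ S} ℓᵢ : S ⊆ {1,…,k}}` is a lattice
under the induced order, and covers in `K` are covers in `L`. -/
theorem geometric_minor_lattice {L : Type*} [Lattice L] [Fintype L] [OrderBot L]
    (hatomistic : ∀ x : L, ∃ s : Finset L, (∀ a ∈ s, IsAtom a) ∧ x = s.sup id)
    (hsemimod : ∀ x y : L, x ⊓ y ⋖ x → x ⊓ y ⋖ y → (x ⋖ x ⊔ y ∧ y ⋖ x ⊔ y))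
    (k : ℕ) (ℓ : L) (f : Fin k → L) (hf : ∀ i, ℓ ⋖ f i) :
    (∀ x ∈ {x : L | ∃ S : Finset (Fin k), x = ℓ ⊔ S.sup f},
     ∀ y ∈ {x : L | ∃ S : Finset (Fin k), x = ℓ ⊔ S.sup f},
      -- joins of K are joins of L, so K is a join-subsemilattice
      x ⊔ y ∈ {x : L | ∃ S : Finset (Fin k), x = ℓ ⊔ S.sup f}) ∧
    (∀ x ∈ {x : L | ∃ S : Finset (Fin k), x = ℓ ⊔ S.sup f},
     ∀ y ∈ {x : L | ∃ S : Finset (Fin k), x = ℓ ⊔ S.sup f},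
      -- any two elements of K have a greatest lower bound within K
      ∃ m ∈ {x : L | ∃ S : Finset (Fin k), x = ℓ ⊔ S.sup f},
        m ≤ x ∧ m ≤ y ∧
        ∀ z ∈ {x : L | ∃ S : Finset (Fin k), x = ℓ ⊔ S.sup f},
          z ≤ x → z ≤ y → z ≤ m) ∧
    (∀ x ∈ {x : L | ∃ S : Finset (Fin k), x = ℓ ⊔ S.sup f},
     ∀ y ∈ {x : L | ∃ S : Finset (Fin k), x = ℓ ⊔ S.sup f},
      -- covers in K are covers in L
      x < y → (∀ z ∈ {x : L | ∃ S : Finset (Fin k), x = ℓ ⊔ S.sup f},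
        ¬(x < z ∧ z < y)) → x ⋖ y) := by
  classical
  -- Key lemma: for x = ℓ ⊔ S.sup f and f i ≰ x, x is covered by x ⊔ f i.
  have covA : ∀ S : Finset (Fin k), ∀ i : Fin k, ¬ f i ≤ ℓ ⊔ S.sup f →
      (ℓ ⊔ S.sup f) ⋖ (ℓ ⊔ S.sup f) ⊔ f i := by
    intro S
    induction S using Finset.induction_on with
    | empty =>
      intro i hi
      have h := hf i
      simpa [sup_eq_right.mpr h.le] using h
    | @insert j S hjS ih =>
      have hx' : ℓ ⊔ (insert j S).sup f = (ℓ ⊔ S.sup f) ⊔ f j := by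
        rw [Finset.sup_insert, sup_comm (f j) (S.sup f), ← sup_assoc]
      intro i hi
      rw [hx'] at hi ⊢
      set x := ℓ ⊔ S.sup f with hxdef
      by_cases hjx : f j ≤ x
      · rw [sup_eq_left.mpr hjx] at hi ⊢
        exact ih i hi
      · have hb : x ⋖ x ⊔ f j := ih j hjx
        have hix : ¬ f i ≤ x := fun h => hi (h.trans le_sup_left)
        have ha : x ⋖ x ⊔ f i := ih i hix
        have hmeet : (x ⊔ f i) ⊓ (x ⊔ f j) = x := by
          rcases ha.eq_or_eq (le_inf le_sup_left le_sup_left) inf_le_left with h | h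
          · exact h
          · exfalso
            exact hi (le_sup_right.trans (h ▸ inf_le_right))
        have hsm := hsemimod (x ⊔ f i) (x ⊔ f j)
          (by rw [hmeet]; exact ha) (by rw [hmeet]; exact hb)
        have heq : (x ⊔ f i) ⊔ (x ⊔ f j) = (x ⊔ f j) ⊔ f i := by
          rw [sup_sup_sup_comm, sup_idem, sup_comm (f i) (f j), ← sup_assoc]
        rw [heq] at hsm
        exact hsm.2
  refine ⟨?_, ?_, ?_⟩
  · -- closed under joins
    rintro x ⟨Sx, rfl⟩ y ⟨Sy, rfl⟩
    refine ⟨Sx ∪ Sy, ?_⟩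
    rw [Finset.sup_union, ← sup_sup_sup_comm, sup_idem]
  · -- meets exist within K
    rintro x ⟨Sx, rfl⟩ y ⟨Sy, rfl⟩
    set x := ℓ ⊔ Sx.sup f with hxd
    set y := ℓ ⊔ Sy.sup f with hyd
    set T : Finset (Fin k) := Finset.univ.filter (fun i => f i ≤ x ∧ f i ≤ y) with hT
    refine ⟨ℓ ⊔ T.sup f, ⟨T, rfl⟩, ?_, ?_, ?_⟩
    · exact sup_le le_sup_left
        (Finset.sup_le fun i hiT => ((Finset.mem_filter.mp hiT).2).1)
    · exact sup_le le_sup_left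
        (Finset.sup_le fun i hiT => ((Finset.mem_filter.mp hiT).2).2)
    · rintro z ⟨Sz, rfl⟩ hzx hzy
      refine sup_le le_sup_left (Finset.sup_le fun i hiz => ?_)
      have hfi : f i ≤ ℓ ⊔ Sz.sup f := (Finset.le_sup hiz).trans le_sup_right
      have hiT : i ∈ T := Finset.mem_filter.mpr
        ⟨Finset.mem_univ i, hfi.trans hzx, hfi.trans hzy⟩
      exact (Finset.le_sup hiT).trans le_sup_right
  · -- covers in K are covers in L
    rintro x ⟨Sx, rfl⟩ y ⟨Sy, rfl⟩ hlt hmax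
    set x := ℓ ⊔ Sx.sup f with hxd
    set y := ℓ ⊔ Sy.sup f with hyd
    have hex : ∃ i ∈ Sy, ¬ f i ≤ x := by
      by_contra h
      push_neg at h
      exact hlt.not_ge (sup_le le_sup_left (Finset.sup_le h))
    obtain ⟨i, hiSy, hix⟩ := hex
    have hzK : x ⊔ f i ∈ {x : L | ∃ S : Finset (Fin k), x = ℓ ⊔ S.sup f} := by
      refine ⟨insert i Sx, ?_⟩
      rw [Finset.sup_insert, sup_comm (f i) (Sx.sup f), ← sup_assoc]
    have hcov : x ⋖ x ⊔ f i := covA Sx i hix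
    have hzy : x ⊔ f i ≤ y := sup_le hlt.le ((Finset.le_sup hiSy).trans le_sup_right)
    have := hmax _ hzK
    have hzey : x ⊔ f i = y := by
      by_contra hne
      exact this ⟨hcov.lt, lt_of_le_of_ne hzy hne⟩
    rw [← hzey]
    exact hcov
end

section
/- Let L be a finite geometric lattice, ℓ ∈ L, and ℓ₁,...,ℓ_k elements covering ℓ. Then the join-subsemilattice K = {ℓ ∨ ⋁_{i∈S} ℓ_i : S ⊆ {1,...,k}} of L, with the induced order, is a geometric lattice whose atoms are among ℓ₁,...,ℓ_k. -/
/-- `covK K x y` means `y` covers `x` within the subset `K` of `L`. -/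
def covK {L : Type*} [Lattice L] (K : Set L) (x y : L) : Prop :=
  x ∈ K ∧ y ∈ K ∧ x < y ∧ ∀ z ∈ K, ¬(x < z ∧ z < y)

/-- In a finite geometric lattice `L`, for elements `ℓ₁, …, ℓ_k` covering `ℓ`,
the join-subsemilattice `K = {ℓ ⊔ ⋁_{i ∈ S} ℓᵢ : S ⊆ {1,…,k}}` with the
induced order is a geometric lattice whose atoms are among `ℓ₁, …, ℓ_k`:
`ℓ` is the bottom of `K`, the atoms of `K` are among the `ℓᵢ`, every element
of `K` is a join of atoms of `K`, and `K` is semimodular. -/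
theorem geometric_minor_geometric {L : Type*} [Lattice L] [Fintype L] [OrderBot L]
    (hatomistic : ∀ x : L, ∃ s : Finset L, (∀ a ∈ s, IsAtom a) ∧ x = s.sup id)
    (hsemimod : ∀ x y : L, x ⊓ y ⋖ x → x ⊓ y ⋖ y → (x ⋖ x ⊔ y ∧ y ⋖ x ⊔ y))
    (k : ℕ) (ℓ : L) (f : Fin k → L) (hf : ∀ i, ℓ ⋖ f i)
    (K : Set L) (hK : K = {x : L | ∃ S : Finset (Fin k), x = ℓ ⊔ S.sup f}) :
    -- ℓ is the bottom element of K
    (ℓ ∈ K ∧ ∀ x ∈ K, ℓ ≤ x) ∧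
    -- the atoms of K are among ℓ₁, …, ℓ_k
    (∀ a : L, covK K ℓ a → ∃ i, a = f i) ∧
    -- K is atomistic: every element of K is a join of atoms of K
    (∀ x ∈ K, ∃ S : Finset L, (∀ a ∈ S, covK K ℓ a) ∧ x = ℓ ⊔ S.sup id) ∧
    -- K is semimodular: if w is the meet in K of x and y and is covered (in K)
    -- by both, then x ⊔ y covers (in K) both x and y
    (∀ x y w : L, covK K w x → covK K w y →
      (∀ z ∈ K, z ≤ x → z ≤ y → z ≤ w) →
      covK K x (x ⊔ y) ∧ covK K y (x ⊔ y)) := by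
  classical
  subst hK
  set K : Set L := {x : L | ∃ S : Finset (Fin k), x = ℓ ⊔ S.sup f} with hKdef
  -- basic algebra
  have hins : ∀ (S : Finset (Fin k)) (i : Fin k),
      ℓ ⊔ (insert i S).sup f = (ℓ ⊔ S.sup f) ⊔ f i := by
    intro S i
    rw [Finset.sup_insert]
    rw [sup_comm (f i) (S.sup f), ← sup_assoc]
  have hℓK : ℓ ∈ K := ⟨∅, by simp⟩
  have hleK : ∀ x ∈ K, ℓ ≤ x := by
    rintro x ⟨S, rfl⟩; exact le_sup_left
  have hfK : ∀ i, f i ∈ K := by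
    intro i
    exact ⟨{i}, by simp [sup_eq_right.2 (hf i).le]⟩
  have hjoinK : ∀ x ∈ K, ∀ y ∈ K, x ⊔ y ∈ K := by
    rintro x ⟨Sx, rfl⟩ y ⟨Sy, rfl⟩
    refine ⟨Sx ∪ Sy, ?_⟩
    rw [Finset.sup_union, sup_sup_sup_comm, sup_idem]
  -- existence of a "direction" for any strict inequality in K
  have hwit : ∀ w ∈ K, ∀ x ∈ K, w < x → ∃ i, ¬ f i ≤ w ∧ f i ≤ x := by
    rintro w hw x ⟨Sx, rfl⟩ hlt
    by_contra hcon
    push_neg at hcon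
    have hall : ∀ i ∈ Sx, f i ≤ w := by
      intro i hi
      by_contra hiw
      exact hcon i hiw ((Finset.le_sup hi).trans le_sup_right)
    exact absurd (sup_le (hleK w hw) (Finset.sup_le hall)) (not_le_of_gt hlt)
  -- any cover in K is obtained by joining one f i
  have hcov_eq : ∀ w x : L, covK K w x → ∃ i, ¬ f i ≤ w ∧ x = w ⊔ f i := by
    rintro w x ⟨hw, hx, hlt, hnb⟩
    obtain ⟨i, hiw, hix⟩ := hwit w hw x hx hlt
    obtain ⟨Sw, rfl⟩ := hw
    have hmem : (ℓ ⊔ Sw.sup f) ⊔ f i ∈ K := ⟨insert i Sw, (hins Sw i).symm⟩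
    have h1 : ℓ ⊔ Sw.sup f < (ℓ ⊔ Sw.sup f) ⊔ f i := left_lt_sup.2 hiw
    have h2 : (ℓ ⊔ Sw.sup f) ⊔ f i ≤ x := sup_le hlt.le hix
    refine ⟨i, hiw, ?_⟩
    rcases lt_or_eq_of_le h2 with h3 | h3
    · exact absurd ⟨h1, h3⟩ (hnb _ hmem)
    · exact h3.symm
  -- each f i covers ℓ in K
  have hatomK : ∀ i, covK K ℓ (f i) := by
    intro i
    refine ⟨hℓK, hfK i, (hf i).lt, ?_⟩
    rintro z hz ⟨h1, h2⟩
    obtain ⟨j, hjℓ, hjz⟩ := hwit ℓ hℓK z hz h1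
    have : ℓ < f j := (hf j).lt
    exact (hf i).2 this (lt_of_le_of_lt hjz h2)
  -- key lemma: joining a fresh cover of ℓ to an element of K is a cover in L
  have key : ∀ S : Finset (Fin k), ∀ q : L, ℓ ⋖ q → ¬ q ≤ ℓ ⊔ S.sup f →
      (ℓ ⊔ S.sup f) ⋖ (ℓ ⊔ S.sup f) ⊔ q := by
    intro S
    induction S using Finset.induction_on with
    | empty =>
      intro q hq hnq
      simp only [Finset.sup_empty, sup_bot_eq] at *
      rwa [sup_eq_right.2 hq.le]
    | @insert i S hi ih =>
      intro q hq hnq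
      rw [hins S i] at hnq ⊢
      by_cases hpx : f i ≤ ℓ ⊔ S.sup f
      · rw [sup_eq_left.2 hpx] at hnq ⊢
        exact ih q hq hnq
      · set x' := ℓ ⊔ S.sup f with hx'
        set x := x' ⊔ f i with hx
        have h1 : x' ⋖ x := ih (f i) (hf i) hpx
        have hq' : ¬ q ≤ x' := fun h => hnq (h.trans le_sup_left)
        have h2 : x' ⋖ x' ⊔ q := ih q hq hq'
        set b := x' ⊔ q with hb
        have hm : x ⊓ b = x' := by
          rcases lt_or_eq_of_le (le_inf (le_sup_left : x' ≤ x) (le_sup_left : x' ≤ b)) with h | h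
          · exfalso
            have hxb : x ⊓ b = x := by
              rcases lt_or_eq_of_le (inf_le_left : x ⊓ b ≤ x) with h' | h'
              · exact absurd h' (h1.2 h)
              · exact h'
            have hxleb : x ≤ b := hxb ▸ inf_le_right
            have : x = b := by
              rcases lt_or_eq_of_le hxleb with h' | h'
              · exact absurd h' (h2.2 (lt_of_lt_of_le (left_lt_sup.2 hpx) le_rfl))
              · exact h'
            exact hnq (this ▸ le_sup_right)
          · exact h.symm
        have hsem := hsemimod x b (hm ▸ h1) (hm ▸ h2)
        have hxb : x ⊔ b = x ⊔ q := by
          rw [hb, ← sup_assoc, sup_comm x x', hx, ← sup_assoc, sup_idem]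
        rw [hxb] at hsem
        exact hsem.1
  refine ⟨⟨hℓK, hleK⟩, ?_, ?_, ?_⟩
  · -- atoms among f i
    intro a ha
    obtain ⟨i, hiℓ, hia⟩ := hcov_eq ℓ a ha
    exact ⟨i, by rw [hia, sup_eq_right.2 (hf i).le]⟩
  · -- atomistic
    rintro x ⟨Sx, rfl⟩
    refine ⟨Sx.image f, ?_, ?_⟩
    · intro a ha
      obtain ⟨i, _, rfl⟩ := Finset.mem_image.1 ha
      exact hatomK i
    · simp [Finset.sup_image]
  · -- semimodularity
    intro x y w hwx hwy hmeet
    obtain ⟨i, hiw, hxi⟩ := hcov_eq w x hwx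
    obtain ⟨j, hjw, hyj⟩ := hcov_eq w y hwy
    have hxK := hwx.2.1
    have hyK := hwy.2.1
    have hwK := hwx.1
    have hwx' := hwx.2.2.1
    have hwy' := hwy.2.2.1
    have hxyK : x ⊔ y ∈ K := hjoinK x hxK y hyK
    -- f j ≰ x
    have hfjx : ¬ f j ≤ x := by
      intro h
      have : y ≤ x := hyj ▸ sup_le hwx'.le h
      exact absurd (hmeet y hyK this le_rfl) (not_le_of_gt hwy')
    have hfiy : ¬ f i ≤ y := by
      intro h
      have : x ≤ y := hxi ▸ sup_le hwy'.le h
      exact absurd (hmeet x hxK le_rfl this) (not_le_of_gt hwx')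
    have hxy1 : x ⊔ y = x ⊔ f j := by
      rw [hyj, ← sup_assoc, sup_eq_left.2 hwx'.le]
    have hxy2 : x ⊔ y = y ⊔ f i := by
      rw [hxi, sup_comm (w ⊔ f i) y, ← sup_assoc, sup_eq_left.2 hwy'.le]
    obtain ⟨Sx, hSx⟩ := hxK
    obtain ⟨Sy, hSy⟩ := hyK
    have hcx : x ⋖ x ⊔ y := by
      have h := key Sx (f j) (hf j) (by rw [← hSx]; exact hfjx)
      rw [← hSx] at h
      rwa [← hxy1] at h
    have hcy : y ⋖ x ⊔ y := by
      have h := key Sy (f i) (hf i) (by rw [← hSy]; exact hfiy)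
      rw [← hSy] at h
      rwa [← hxy2] at h
    constructor
    · exact ⟨hwx.2.1, hxyK, hcx.lt, fun z hz h => hcx.2 h.1 h.2⟩
    · exact ⟨hwy.2.1, hxyK, hcy.lt, fun z hz h => hcy.2 h.1 h.2⟩
end

section
/- Let P be a finite poset, L its lattice of lower order ideals, J a lower order ideal of P, and I ⊆ P disjoint from J. Then the set of lower order ideals of P that contain J and all of whose maximal elements lie in I ∪ J, ordered by inclusion, is a lattice isomorphic to the lattice of lower order ideals of the induced subposet I. -/
/-- Let `P` be a finite poset, `J` a lower order ideal of `P` and `I ⊆ P`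
disjoint from `J`. The lower order ideals of `P` containing `J` all of whose
maximal elements lie in `I ∪ J`, ordered by inclusion, form a lattice
isomorphic to the lattice of lower order ideals of the induced subposet `I`. -/
theorem order_minor_iso {P : Type*} [PartialOrder P] [Fintype P]
    (I J : Set P)
    (hJ : ∀ a b : P, a ≤ b → b ∈ J → a ∈ J)
    (hIJ : Disjoint I J) :
    Nonempty
      (({Λ : Set P // (∀ a b : P, a ≤ b → b ∈ Λ → a ∈ Λ) ∧ J ⊆ Λ ∧
          ∀ m ∈ Λ, (∀ x ∈ Λ, ¬ m < x) → m ∈ I ∪ J})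
        ≃o
       ({S : Set P // S ⊆ I ∧ ∀ a b : P, a ∈ I → b ∈ S → a ≤ b → a ∈ S})) := by
  -- key decomposition: any Λ in the left type equals J ∪ ↓(Λ ∩ I)
  have key : ∀ Λ : Set P, (∀ a b : P, a ≤ b → b ∈ Λ → a ∈ Λ) → J ⊆ Λ →
      (∀ m ∈ Λ, (∀ x ∈ Λ, ¬ m < x) → m ∈ I ∪ J) →
      ∀ a ∈ Λ, a ∈ J ∨ ∃ b, b ∈ Λ ∧ b ∈ I ∧ a ≤ b := by
    intro Λ hdown hJΛ hmax a ha
    obtain ⟨m, ham, hm⟩ := Finite.exists_le_maximal (p := (· ∈ Λ)) ha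
    have hmmax : ∀ x ∈ Λ, ¬ m < x := fun x hx hlt =>
      hlt.not_ge (hm.2 hx hlt.le)
    rcases hmax m hm.1 hmmax with hmI | hmJ
    · exact Or.inr ⟨m, hm.1, hmI, ham⟩
    · exact Or.inl (hJ a m ham hmJ)
  refine ⟨{
    toFun := fun Λ => ⟨Λ.1 ∩ I, Set.inter_subset_right, ?_⟩
    invFun := fun S => ⟨J ∪ {a | ∃ b ∈ S.1, a ≤ b}, ?_, ?_, ?_⟩
    left_inv := ?_
    right_inv := ?_
    map_rel_iff' := ?_ }⟩
  · rintro a b haI ⟨hbΛ, _⟩ hab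
    exact ⟨Λ.2.1 a b hab hbΛ, haI⟩
  · rintro a b hab (hbJ | ⟨c, hcS, hbc⟩)
    · exact Or.inl (hJ a b hab hbJ)
    · exact Or.inr ⟨c, hcS, hab.trans hbc⟩
  · exact Set.subset_union_left
  · rintro m (hmJ | ⟨c, hcS, hmc⟩) hmax
    · exact Or.inr hmJ
    · have : m = c := by
        rcases eq_or_lt_of_le hmc with h | h
        · exact h
        · exact absurd h (hmax c (Or.inr ⟨c, hcS, le_refl c⟩))
      exact Or.inl (this ▸ S.2.1 hcS)
  · rintro ⟨Λ, hdown, hJΛ, hmax⟩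
    ext a
    simp only [Set.mem_union, Set.mem_setOf_eq, Set.mem_inter_iff]
    constructor
    · rintro (haJ | ⟨b, ⟨hbΛ, hbI⟩, hab⟩)
      · exact hJΛ haJ
      · exact hdown a b hab hbΛ
    · intro ha
      rcases key Λ hdown hJΛ hmax a ha with h | ⟨b, hbΛ, hbI, hab⟩
      · exact Or.inl h
      · exact Or.inr ⟨b, ⟨hbΛ, hbI⟩, hab⟩
  · rintro ⟨S, hSI, hSdown⟩
    ext a
    simp only [Set.mem_inter_iff, Set.mem_union, Set.mem_setOf_eq]
    constructor
    · rintro ⟨hJa | ⟨b, hbS, hab⟩, haI⟩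
      · exact absurd hJa (Set.disjoint_left.mp hIJ haI)
      · exact hSdown a b haI hbS hab
    · intro haS
      exact ⟨Or.inr ⟨a, haS, le_refl a⟩, hSI haS⟩
  · rintro ⟨Λ₁, hd₁, hJ₁, hm₁⟩ ⟨Λ₂, hd₂, hJ₂, hm₂⟩
    simp only [Equiv.coe_fn_mk, Subtype.mk_le_mk, Set.le_eq_subset]
    constructor
    · intro h a ha
      rcases key Λ₁ hd₁ hJ₁ hm₁ a ha with haJ | ⟨b, hbΛ, hbI, hab⟩
      · exact hJ₂ haJ
      · exact hd₂ a b hab (h ⟨hbΛ, hbI⟩).1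
    · intro h a ha
      exact ⟨h ha.1, ha.2⟩
end

section
/- Let L be a finite lattice with join-irreducibles generating it, G a generating set of L under join (G ⊆ L∖{0̂}, every element a join of a subset of G, with empty join 0̂). Every minor of (L,G) can be written as a contraction followed by a deletion: if (K,H) is obtained from (L,G) by any finite sequence of contractions and deletions, then K = { 0̂_K ∨ ⋁_{h∈S} h : S ⊆ H } where 0̂_K is the minimum of K and each element of H has the form 0̂_K ∨ g for some g ∈ G. -/
/-- A generator enriched lattice inside an ambient lattice `L` is represented
by a pair `(z, H)`: its minimal element `z` and its generating set `H`; its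
element set is `{z ⊔ ⋁ S : S ⊆ H}`. A single deletion or contraction step. -/
inductive MinorStep {L : Type*} [Lattice L] [OrderBot L] :
    L × Set L → L × Set L → Prop
  | del (z : L) (H I : Set L) (hI : I ⊆ H) :
      MinorStep (z, H) (z, H \ I)
  | contr (z : L) (H : Set L) (S : Finset L) (hS : ↑S ⊆ H) :
      MinorStep (z, H)
        (z ⊔ S.sup id,
         {x | ∃ g ∈ H, x = g ⊔ (z ⊔ S.sup id)} \ {z ⊔ S.sup id})

/-- Every minor of a generator enriched lattice `(L, G)` is a contraction
followed by a deletion: if `(K, H)` is a minor with minimal element `z = 0̂_K`,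
then `z` is a join of a subset of `G` and every generator `h ∈ H` has the
form `z ⊔ g` for some `g ∈ G` (so the element set of the minor is
`{z ⊔ ⋁_{h ∈ S} h : S ⊆ H}`, a minor obtained from `(L,G)` by contracting
by `z` and then restricting to `H`). -/
theorem minor_contraction_then_deletion {L : Type*} [Lattice L] [Fintype L]
    [OrderBot L] (G : Set L) (hG0 : (⊥ : L) ∉ G)
    (hGgen : ∀ x : L, ∃ S : Finset L, ↑S ⊆ G ∧ x = S.sup id)
    (z : L) (H : Set L)
    (hminor : Relation.ReflTransGen MinorStep ((⊥ : L), G) (z, H)) :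
    (∃ S : Finset L, ↑S ⊆ G ∧ z = S.sup id) ∧
    (∀ h ∈ H, ∃ g ∈ G, h = z ⊔ g) := by
  have key : ∀ p : L × Set L, Relation.ReflTransGen MinorStep ((⊥ : L), G) p →
      (∃ S : Finset L, ↑S ⊆ G ∧ p.1 = S.sup id) ∧
      (∀ h ∈ p.2, ∃ g ∈ G, h = p.1 ⊔ g) := by
    intro p hp
    induction hp with
    | refl =>
      refine ⟨⟨∅, by simp, by simp⟩, fun h hh => ⟨h, hh, ?_⟩⟩
      simp
    | tail hRT hstep ih =>
      cases hstep with
      | del z₀ H₀ I hI =>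
        exact ⟨ih.1, fun h hh => ih.2 h hh.1⟩
      | contr z₀ H₀ S hS =>
        classical
        obtain ⟨⟨S₀, hS₀, hz₀⟩, hH⟩ := ih
        choose f hf1 hf2 using fun (s : L) (hs : s ∈ S) => hH s (hS hs)
        constructor
        · refine ⟨S₀ ∪ S.attach.image (fun s => f s.1 s.2), ?_, ?_⟩
          · intro x hx
            simp only [Finset.coe_union, Set.mem_union, Finset.coe_image,
              Set.mem_image] at hx
            rcases hx with hx | ⟨s, _, rfl⟩
            · exact hS₀ hx
            · exact hf1 s.1 s.2
          · show z₀ ⊔ S.sup id = _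
            have hz₀' : z₀ = S₀.sup id := hz₀
            apply le_antisymm
            · refine sup_le ?_ (Finset.sup_le fun s hs => ?_)
              · rw [hz₀']
                exact Finset.sup_mono Finset.subset_union_left
              · rw [hf2 s hs]
                refine sup_le ?_ ?_
                · rw [hz₀']
                  exact Finset.sup_mono Finset.subset_union_left
                · exact Finset.le_sup (f := id) (Finset.mem_union_right _
                    (Finset.mem_image.2 ⟨⟨s, hs⟩, Finset.mem_attach _ _, rfl⟩))
            · refine Finset.sup_le fun x hx => ?_
              rcases Finset.mem_union.1 hx with hx | hx
              · refine le_sup_of_le_left ?_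
                rw [hz₀']
                exact Finset.le_sup hx
              · obtain ⟨s, -, rfl⟩ := Finset.mem_image.1 hx
                refine le_sup_of_le_right (Finset.le_sup_of_le s.2 ?_)
                exact le_of_le_of_eq le_sup_right (hf2 s.1 s.2).symm
        · rintro h ⟨⟨g, hg, rfl⟩, -⟩
          obtain ⟨g₀, hg₀, hgeq⟩ := hH g hg
          refine ⟨g₀, hg₀, ?_⟩
          rw [hgeq]
          apply le_antisymm
          · exact sup_le (sup_le (le_sup_left.trans le_sup_left) le_sup_right)
              le_sup_left
          · exact sup_le le_sup_right (le_sup_of_le_left le_sup_right)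
  exact key (z, H) hminor
end
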